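/- Let K = K(B,D) be a self-similar set, where B is a similarity matrix with scaling factor ρ > 1, and let s = log(card D)/log ρ. Then limsup_{r→0} sup{H^s(K ∩ U)/(diam U)^s : U ⊆ ℝⁿ convex, U ∩ K ≠ ∅, 0 < diam U ≤ r} = sup_{r>0} sup{H^s(K ∩ U)/(diam U)^s : U ⊆ ℝⁿ convex, U ∩ K ≠ ∅, 0 < diam U ≤ r}; that is, the limsup as r → 0 equals the supremum over all convex sets U of positive diameter meeting K. -/

import Mathlib

open MeasureTheory Filter
open scoped ENNReal Topology

/-- **Lemma.** Let `K = K(B,D)` be a self-similar set, where `B` is a similarity matrix with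
scaling factor `ρ > 1`, and let `s = log(card D)/log ρ`. Then
`limsup_{r→0} sup { H^s(K ∩ U)/(diam U)^s : U convex, U ∩ K ≠ ∅, 0 < diam U ≤ r }`
equals the supremum of the same quantity over all `r > 0`. -/
theorem limsup_convex_density_eq_sup {n : ℕ} (B : Matrix (Fin n) (Fin n) ℝ) (ρ : ℝ)
    (hρ : 1 < ρ) (hsim : ∀ x : EuclideanSpace ℝ (Fin n), ‖Matrix.toEuclideanLin B x‖ = ρ * ‖x‖)
    (D : Finset (EuclideanSpace ℝ (Fin n))) (hD0 : (0 : EuclideanSpace ℝ (Fin n)) ∈ D)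
    (K : Set (EuclideanSpace ℝ (Fin n))) (hKc : IsCompact K) (hKne : K.Nonempty)
    (hK : Matrix.toEuclideanLin B '' K = ⋃ d ∈ D, (fun x => x + d) '' K)
    (s : ℝ) (hs : s = Real.log D.card / Real.log ρ) :
    Filter.limsup (fun r : ℝ =>
        ⨆ (U : Set (EuclideanSpace ℝ (Fin n))) (_ : Convex ℝ U) (_ : (U ∩ K).Nonempty)
          (_ : 0 < Metric.diam U) (_ : Metric.diam U ≤ r),
          Measure.hausdorffMeasure s (K ∩ U) / EMetric.diam U ^ s) (𝓝[>] (0 : ℝ)) =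
      ⨆ (r : ℝ) (_ : 0 < r),
        ⨆ (U : Set (EuclideanSpace ℝ (Fin n))) (_ : Convex ℝ U) (_ : (U ∩ K).Nonempty)
          (_ : 0 < Metric.diam U) (_ : Metric.diam U ≤ r),
          Measure.hausdorffMeasure s (K ∩ U) / EMetric.diam U ^ s := by
  set L := Matrix.toEuclideanLin B with hLdef
  have hρ0 : (0:ℝ) < ρ := lt_trans one_pos hρ
  -- s is nonnegative
  have hD1 : (1:ℝ) ≤ (D.card : ℝ) := by
    exact_mod_cast Nat.one_le_iff_ne_zero.mpr (Finset.card_ne_zero_of_mem hD0)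
  have hs0 : 0 ≤ s := by
    rw [hs]
    exact div_nonneg (Real.log_nonneg hD1) (Real.log_nonneg hρ.le)
  -- L is bijective
  have hLinj : Function.Injective L := by
    intro x y hxy
    have h0 : ‖L (x - y)‖ = 0 := by rw [map_sub, hxy, sub_self, norm_zero]
    rw [hsim] at h0
    have : ‖x - y‖ = 0 := by
      rcases mul_eq_zero.mp h0 with h | h
      · exact absurd h hρ0.ne'
      · exact h
    exact sub_eq_zero.mp (norm_eq_zero.mp this)
  have hLsurj : Function.Surjective L :=
    (LinearMap.injective_iff_surjective).mp hLinj
  -- K ⊆ L '' K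
  have hKsub : K ⊆ L '' K := by
    intro x hx
    rw [hK]
    exact Set.mem_biUnion hD0 ⟨x, hx, by simp⟩
  -- distance scaling
  have hdist : ∀ x y, dist (L x) (L y) = ρ * dist x y := by
    intro x y
    rw [dist_eq_norm, dist_eq_norm, ← map_sub, hsim]
  set c : ℝ≥0∞ := ENNReal.ofReal ρ with hcdef
  have hc0 : c ≠ 0 := by simp [hcdef, ENNReal.ofReal_eq_zero, not_le, hρ0]
  have hcT : c ≠ ⊤ := ENNReal.ofReal_ne_top
  have hedist : ∀ x y, edist (L x) (L y) = c * edist x y := by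
    intro x y
    rw [edist_dist, edist_dist, hdist, ENNReal.ofReal_mul hρ0.le]
  have hlip : LipschitzWith ρ.toNNReal L := by
    apply LipschitzWith.of_dist_le_mul
    intro x y
    rw [hdist, Real.coe_toNNReal _ hρ0.le]
  -- the inner sup as a function of r
  set g : ℝ → ℝ≥0∞ := fun r =>
      ⨆ (U : Set (EuclideanSpace ℝ (Fin n))) (_ : Convex ℝ U) (_ : (U ∩ K).Nonempty)
        (_ : 0 < Metric.diam U) (_ : Metric.diam U ≤ r),
        Measure.hausdorffMeasure s (K ∩ U) / EMetric.diam U ^ s with hgdef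
  -- monotonicity
  have hmono : Monotone g := by
    intro a b hab
    refine iSup_mono fun U => iSup_mono fun _ => iSup_mono fun _ => iSup_mono fun _ => ?_
    exact iSup_le fun h => le_iSup
      (fun _ : Metric.diam U ≤ b => Measure.hausdorffMeasure s (K ∩ U) / EMetric.diam U ^ s)
      (h.trans hab)
  -- key scaling step
  have hstep : ∀ r : ℝ, g r ≤ g (ρ⁻¹ * r) := by
    intro r
    refine iSup_le fun U => iSup_le fun hU => iSup_le fun hUK => iSup_le fun hd0 =>
      iSup_le fun hdr => ?_
    set U' : Set (EuclideanSpace ℝ (Fin n)) := L ⁻¹' U with hU'def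
    have hU' : Convex ℝ U' := hU.linear_preimage L
    -- diameter relation
    have h1 : EMetric.diam U ≤ c * EMetric.diam U' := by
      have himg : U = L '' U' := (Set.image_preimage_eq U hLsurj).symm
      rw [himg]
      apply EMetric.diam_le
      rintro _ ⟨x, hx, rfl⟩ _ ⟨y, hy, rfl⟩
      rw [hedist]
      exact mul_le_mul_right (EMetric.edist_le_diam_of_mem hx hy) c
    have h2 : EMetric.diam U' ≤ c⁻¹ * EMetric.diam U := by
      apply EMetric.diam_le
      intro x hx y hy
      have h := EMetric.edist_le_diam_of_mem (show L x ∈ U from hx) (show L y ∈ U from hy)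
      rw [hedist] at h
      calc edist x y = c⁻¹ * (c * edist x y) := by
            rw [← mul_assoc, ENNReal.inv_mul_cancel hc0 hcT, one_mul]
        _ ≤ c⁻¹ * EMetric.diam U := mul_le_mul_right h _
    have hdiam : EMetric.diam U = c * EMetric.diam U' := by
      refine le_antisymm h1 ?_
      calc c * EMetric.diam U' ≤ c * (c⁻¹ * EMetric.diam U) := mul_le_mul_right h2 c
        _ = EMetric.diam U := by
            rw [← mul_assoc, ENNReal.mul_inv_cancel hc0 hcT, one_mul]
    -- real diameters
    have hMd : Metric.diam U = ρ * Metric.diam U' := by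
      rw [Metric.diam, Metric.diam]
      change (EMetric.diam U).toReal = ρ * (EMetric.diam U').toReal
      rw [hdiam, ENNReal.toReal_mul, hcdef,
        ENNReal.toReal_ofReal hρ0.le]
    have hd0' : 0 < Metric.diam U' := by nlinarith [hd0, hMd]
    have hdr' : Metric.diam U' ≤ ρ⁻¹ * r := by
      have : Metric.diam U' = ρ⁻¹ * Metric.diam U := by
        rw [hMd]; field_simp
      rw [this]
      exact mul_le_mul_of_nonneg_left hdr (inv_nonneg.mpr hρ0.le)
    -- nonempty intersection
    have hsubm : K ∩ U ⊆ L '' (K ∩ U') := by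
      rintro x ⟨hxK, hxU⟩
      obtain ⟨y, hyK, rfl⟩ := hKsub hxK
      exact ⟨y, ⟨hyK, hxU⟩, rfl⟩
    have hUK' : (U' ∩ K).Nonempty := by
      obtain ⟨x, hxU, hxK⟩ := hUK
      obtain ⟨y, ⟨hyK, hyU'⟩, _⟩ := hsubm ⟨hxK, hxU⟩
      exact ⟨y, hyU', hyK⟩
    -- measure inequality
    have hmeas : Measure.hausdorffMeasure s (K ∩ U)
        ≤ c ^ s * Measure.hausdorffMeasure s (K ∩ U') := by
      calc Measure.hausdorffMeasure s (K ∩ U)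
          ≤ Measure.hausdorffMeasure s (L '' (K ∩ U')) := measure_mono hsubm
        _ ≤ (ρ.toNNReal : ℝ≥0∞) ^ s * Measure.hausdorffMeasure s (K ∩ U') :=
            hlip.hausdorffMeasure_image_le hs0 _
        _ = c ^ s * Measure.hausdorffMeasure s (K ∩ U') := by
            rw [hcdef, ENNReal.ofReal]
    -- ratio inequality
    have hcs0 : c ^ s ≠ 0 := by
      simp only [ne_eq, ENNReal.rpow_eq_zero_iff, not_or]
      constructor
      · rintro ⟨h, -⟩; exact hc0 h
      · rintro ⟨h, -⟩; exact hcT h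
    have hcsT : c ^ s ≠ ⊤ := by
      simp only [ne_eq, ENNReal.rpow_eq_top_iff, not_or]
      constructor
      · rintro ⟨h, -⟩; exact hc0 h
      · rintro ⟨h, -⟩; exact hcT h
    have hratio : Measure.hausdorffMeasure s (K ∩ U) / EMetric.diam U ^ s
        ≤ Measure.hausdorffMeasure s (K ∩ U') / EMetric.diam U' ^ s := by
      have hden : EMetric.diam U ^ s = c ^ s * EMetric.diam U' ^ s := by
        rw [hdiam, ENNReal.mul_rpow_of_nonneg _ _ hs0]
      rw [hden]
      calc Measure.hausdorffMeasure s (K ∩ U) / (c ^ s * EMetric.diam U' ^ s)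
          ≤ c ^ s * Measure.hausdorffMeasure s (K ∩ U') / (c ^ s * EMetric.diam U' ^ s) :=
            ENNReal.div_le_div_right hmeas _
        _ = Measure.hausdorffMeasure s (K ∩ U') / EMetric.diam U' ^ s :=
            ENNReal.mul_div_mul_left _ _ hcs0 hcsT
    refine hratio.trans ?_
    exact le_iSup_of_le U' (le_iSup_of_le hU' (le_iSup_of_le hUK'
      (le_iSup_of_le hd0' (le_iSup_of_le hdr' le_rfl))))
  -- iterate the step
  have hiter : ∀ (k : ℕ) (r : ℝ), g r ≤ g (ρ⁻¹ ^ k * r) := by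
    intro k
    induction k with
    | zero => intro r; simp
    | succ k ih =>
      intro r
      calc g r ≤ g (ρ⁻¹ ^ k * r) := ih r
        _ ≤ g (ρ⁻¹ * (ρ⁻¹ ^ k * r)) := hstep _
        _ = g (ρ⁻¹ ^ (k + 1) * r) := by ring_nf
  -- g is constant on (0, ∞)
  have hconst : ∀ r : ℝ, 0 < r → ∀ t : ℝ, 0 < t → g r ≤ g t := by
    intro r hr t ht
    obtain ⟨k, hk⟩ := exists_pow_lt_of_lt_one (div_pos ht hr) (inv_lt_one_of_one_lt₀ hρ)
    have hkr : ρ⁻¹ ^ k * r ≤ t := ((lt_div_iff₀ hr).mp hk).le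
    exact (hiter k r).trans (hmono hkr)
  have hgc : ∀ r : ℝ, 0 < r → g r = g 1 := fun r hr =>
    le_antisymm (hconst r hr 1 one_pos) (hconst 1 one_pos r hr)
  have hRHS : (⨆ (r : ℝ) (_ : 0 < r), g r) = g 1 := by
    refine le_antisymm (iSup₂_le fun r hr => (hgc r hr).le) ?_
    exact le_iSup₂_of_le 1 one_pos le_rfl
  have hev : ∀ᶠ r in 𝓝[>] (0:ℝ), g r = g 1 :=
    eventually_mem_nhdsWithin.mono fun r hr => hgc r hr
  calc Filter.limsup g (𝓝[>] (0:ℝ)) = Filter.limsup (fun _ => g 1) (𝓝[>] (0:ℝ)) :=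
        Filter.limsup_congr hev
    _ = g 1 := Filter.limsup_const _
    _ = ⨆ (r : ℝ) (_ : 0 < r), g r := hRHS.symm
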